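/- arXiv:2509.08799 — 2 statements merged into one kernel-verified Lean document; each statement's English description precedes it below -/
import Mathlib

section
/- Let ρ be the uniform probability measure on [0,1], N = 1, y_1 = 0, α_1 = 1/2, and for ε > 0 and ψ > 0 let G^ε(ψ) = ∫₀¹ min(√(max(ψ − x², 0))/ε, 1) dx. For all sufficiently small ε > 0 there is a unique ψ^ε > 0 with G^ε(ψ^ε) = 1/2 (the maximizer of the regularized dual functional), and as ε → 0⁺ one has ψ^ε → 1/4 and (ψ^ε − 1/4)/ε² → 1/3; in particular the quadratic convergence rate ‖ψ^ε − ψ*‖ ≲ ε² is tight. -/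
open MeasureTheory Real Filter Set
noncomputable section

def G16 (ε ψ : ℝ) : ℝ :=
  ∫ x in Set.Icc (0 : ℝ) 1, min (Real.sqrt (max (ψ - x ^ 2) 0) / ε) 1

lemma f16_cont (ε ψ : ℝ) : Continuous fun x : ℝ => min (Real.sqrt (max (ψ - x ^ 2) 0) / ε) 1 := by
  fun_prop

lemma G16_interval (ε ψ : ℝ) :
    G16 ε ψ = ∫ x in (0:ℝ)..1, min (Real.sqrt (max (ψ - x ^ 2) 0) / ε) 1 := by
  rw [G16, MeasureTheory.integral_Icc_eq_integral_Ioc,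
    intervalIntegral.integral_of_le (by norm_num : (0:ℝ) ≤ 1)]

lemma G16_continuous (ε : ℝ) : Continuous (G16 ε) := by
  have := intervalIntegral.continuous_parametric_intervalIntegral_of_continuous'
    (μ := volume) (f := fun ψ x : ℝ => min (Real.sqrt (max (ψ - x ^ 2) 0) / ε) 1)
    (by fun_prop : Continuous (Function.uncurry fun ψ x : ℝ => min (Real.sqrt (max (ψ - x ^ 2) 0) / ε) 1))
    0 1
  simpa only [← G16_interval] using this

lemma integral_sqrt_sub {a b : ℝ} (hab : a ≤ b) :
    (∫ x in a..b, Real.sqrt (b - x)) = 2/3 * ((b-a) * Real.sqrt (b-a)) := by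
  have h0 : (∫ x in a..b, Real.sqrt (b - x)) = ∫ x in (b-b)..(b-a), Real.sqrt x :=
    intervalIntegral.integral_comp_sub_left (fun u => Real.sqrt u) b
  rw [h0, sub_self]
  have hc : 0 ≤ b - a := by linarith
  have h1 : (∫ x in (0:ℝ)..(b-a), Real.sqrt x) = ∫ x in (0:ℝ)..(b-a), x ^ ((1:ℝ)/2) := by
    apply intervalIntegral.integral_congr
    intro x hx
    rw [Set.uIcc_of_le hc] at hx
    exact Real.sqrt_eq_rpow x
  rw [h1, integral_rpow (Or.inl (by norm_num))]
  rw [Real.zero_rpow (by norm_num)]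
  have : (b - a) ^ ((1:ℝ)/2 + 1) = (b-a) * Real.sqrt (b-a) := by
    rw [show (1:ℝ)/2 + 1 = 1 + 1/2 by ring, Real.rpow_add' hc (by norm_num),
      Real.rpow_one, ← Real.sqrt_eq_rpow]
  rw [this]; ring

lemma G16_eval {ε ψ : ℝ} (hε : 0 < ε) (h1 : ε ^ 2 < ψ) (h2 : ψ ≤ 1) :
    G16 ε ψ = Real.sqrt (ψ - ε ^ 2) +
      (∫ x in Real.sqrt (ψ - ε ^ 2)..Real.sqrt ψ, Real.sqrt (ψ - x ^ 2)) / ε := by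
  set a := Real.sqrt (ψ - ε ^ 2) with ha
  set b := Real.sqrt ψ with hb
  have hψ0 : 0 < ψ := lt_of_le_of_lt (by positivity) h1
  have ha0 : 0 ≤ a := Real.sqrt_nonneg _
  have hab : a ≤ b := Real.sqrt_le_sqrt (by nlinarith [sq_nonneg ε])
  have hb1 : b ≤ 1 := by
    rw [hb, show (1:ℝ) = Real.sqrt 1 by simp]
    exact Real.sqrt_le_sqrt h2
  have ha2 : a ^ 2 = ψ - ε ^ 2 := Real.sq_sqrt (by linarith)
  have hb2 : b ^ 2 = ψ := Real.sq_sqrt hψ0.le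
  have hi : ∀ u v : ℝ,
      IntervalIntegrable (fun x => min (Real.sqrt (max (ψ - x ^ 2) 0) / ε) 1) volume u v :=
    fun u v => (f16_cont ε ψ).intervalIntegrable u v
  have e1 : (∫ x in (0:ℝ)..1, min (Real.sqrt (max (ψ - x ^ 2) 0) / ε) 1)
      = (∫ x in (0:ℝ)..a, min (Real.sqrt (max (ψ - x ^ 2) 0) / ε) 1)
        + (∫ x in a..(1:ℝ), min (Real.sqrt (max (ψ - x ^ 2) 0) / ε) 1) :=
    (intervalIntegral.integral_add_adjacent_intervals (hi 0 a) (hi a 1)).symm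
  have e2 : (∫ x in a..(1:ℝ), min (Real.sqrt (max (ψ - x ^ 2) 0) / ε) 1)
      = (∫ x in a..b, min (Real.sqrt (max (ψ - x ^ 2) 0) / ε) 1)
        + (∫ x in b..(1:ℝ), min (Real.sqrt (max (ψ - x ^ 2) 0) / ε) 1) :=
    (intervalIntegral.integral_add_adjacent_intervals (hi a b) (hi b 1)).symm
  have p1 : (∫ x in (0:ℝ)..a, min (Real.sqrt (max (ψ - x ^ 2) 0) / ε) 1) = a := by
    rw [intervalIntegral.integral_congr (g := fun _ => (1:ℝ)) ?_]
    · simp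
    · intro x hx
      rw [Set.uIcc_of_le ha0] at hx
      have h' : ε ^ 2 ≤ ψ - x ^ 2 := by nlinarith [hx.1, hx.2]
      have hmax : max (ψ - x ^ 2) 0 = ψ - x ^ 2 := max_eq_left (by nlinarith)
      have h'' : ε ≤ Real.sqrt (ψ - x ^ 2) := by
        rw [show ε = Real.sqrt (ε ^ 2) by rw [Real.sqrt_sq hε.le]]
        exact Real.sqrt_le_sqrt h'
      have : (1:ℝ) ≤ Real.sqrt (ψ - x ^ 2) / ε := (one_le_div hε).2 h''
      simp only [hmax]
      exact min_eq_right this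
  have p2 : (∫ x in a..b, min (Real.sqrt (max (ψ - x ^ 2) 0) / ε) 1)
      = (∫ x in a..b, Real.sqrt (ψ - x ^ 2)) / ε := by
    rw [← intervalIntegral.integral_div]
    apply intervalIntegral.integral_congr
    intro x hx
    rw [Set.uIcc_of_le hab] at hx
    have hx0 : 0 ≤ x := le_trans ha0 hx.1
    have h' : 0 ≤ ψ - x ^ 2 := by nlinarith [hx.2]
    have h'' : ψ - x ^ 2 ≤ ε ^ 2 := by nlinarith [hx.1]
    have hmax : max (ψ - x ^ 2) 0 = ψ - x ^ 2 := max_eq_left h'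
    have hle : Real.sqrt (ψ - x ^ 2) ≤ ε := by
      rw [show ε = Real.sqrt (ε ^ 2) by rw [Real.sqrt_sq hε.le]]
      exact Real.sqrt_le_sqrt h''
    have : Real.sqrt (ψ - x ^ 2) / ε ≤ 1 := (div_le_one hε).2 hle
    simp only [hmax]
    exact min_eq_left this
  have p3 : (∫ x in b..(1:ℝ), min (Real.sqrt (max (ψ - x ^ 2) 0) / ε) 1) = 0 := by
    rw [intervalIntegral.integral_congr (g := fun _ => (0:ℝ)) ?_]
    · simp
    · intro x hx
      rw [Set.uIcc_of_le hb1] at hx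
      have hb0 : 0 ≤ b := Real.sqrt_nonneg _
      have h' : ψ - x ^ 2 ≤ 0 := by nlinarith [hx.1]
      have hmax : max (ψ - x ^ 2) 0 = 0 := max_eq_right h'
      simp [hmax, hε.le]
  rw [G16_interval, e1, e2, p1, p2, p3]
  ring

lemma G16_bounds {ε ψ : ℝ} (hε : 0 < ε) (h1 : ε ^ 2 < ψ) (h2 : ψ ≤ 1) :
    Real.sqrt (ψ - ε ^ 2) + 2/3 * ε^2 / (Real.sqrt (ψ - ε ^ 2) + Real.sqrt ψ) ≤ G16 ε ψ ∧
    G16 ε ψ ≤ Real.sqrt (ψ - ε ^ 2) + 2/3 * ε^2 * Real.sqrt (2 * Real.sqrt ψ) /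
      ((Real.sqrt (ψ - ε ^ 2) + Real.sqrt ψ) * Real.sqrt (Real.sqrt (ψ - ε ^ 2) + Real.sqrt ψ)) := by
  set a := Real.sqrt (ψ - ε ^ 2) with ha
  set b := Real.sqrt ψ with hb
  have hψ0 : 0 < ψ := lt_of_le_of_lt (by positivity) h1
  have ha0 : 0 ≤ a := Real.sqrt_nonneg _
  have hb0 : 0 < b := Real.sqrt_pos.2 hψ0
  have hab : a ≤ b := Real.sqrt_le_sqrt (by nlinarith [sq_nonneg ε])
  have ha2 : a ^ 2 = ψ - ε ^ 2 := Real.sq_sqrt (by linarith)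
  have hb2 : b ^ 2 = ψ := Real.sq_sqrt hψ0.le
  have hab0 : 0 < a + b := by linarith
  -- b - a = ε^2/(a+b)
  have hba : b - a = ε^2 / (a + b) := by
    field_simp
    nlinarith [ha2, hb2]
  have hsba : Real.sqrt (b - a) = ε / Real.sqrt (a + b) := by
    rw [hba, Real.sqrt_div (by positivity) (a+b), Real.sqrt_sq hε.le]
  have hsab : Real.sqrt (a + b) * Real.sqrt (a + b) = a + b :=
    Real.mul_self_sqrt hab0.le
  have hsabpos : 0 < Real.sqrt (a + b) := Real.sqrt_pos.2 hab0
  -- pointwise bounds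
  have keylow : ∀ x ∈ Set.Icc a b,
      Real.sqrt (a + b) * Real.sqrt (b - x) ≤ Real.sqrt (ψ - x ^ 2) := by
    intro x hx
    rw [← Real.sqrt_mul hab0.le]
    apply Real.sqrt_le_sqrt
    nlinarith [hx.1, hx.2, ha2, hb2]
  have keyhigh : ∀ x ∈ Set.Icc a b,
      Real.sqrt (ψ - x ^ 2) ≤ Real.sqrt (2 * b) * Real.sqrt (b - x) := by
    intro x hx
    rw [← Real.sqrt_mul (by linarith)]
    apply Real.sqrt_le_sqrt
    have hx0 : 0 ≤ x := le_trans ha0 hx.1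
    nlinarith [hx.1, hx.2, hb2]
  have int1 : IntervalIntegrable (fun x => Real.sqrt (ψ - x ^ 2)) volume a b :=
    (Continuous.intervalIntegrable (by fun_prop)) a b
  have int2 : IntervalIntegrable (fun x => Real.sqrt (a + b) * Real.sqrt (b - x)) volume a b :=
    (Continuous.intervalIntegrable (by fun_prop)) a b
  have int3 : IntervalIntegrable (fun x => Real.sqrt (2 * b) * Real.sqrt (b - x)) volume a b :=
    (Continuous.intervalIntegrable (by fun_prop)) a b
  have ilow : Real.sqrt (a + b) * (2/3 * ((b-a) * Real.sqrt (b-a)))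
      ≤ ∫ x in a..b, Real.sqrt (ψ - x ^ 2) := by
    calc Real.sqrt (a + b) * (2/3 * ((b-a) * Real.sqrt (b-a)))
        = ∫ x in a..b, Real.sqrt (a + b) * Real.sqrt (b - x) := by
          rw [intervalIntegral.integral_const_mul, integral_sqrt_sub hab]
      _ ≤ _ := intervalIntegral.integral_mono_on hab int2 int1 keylow
  have ihigh : (∫ x in a..b, Real.sqrt (ψ - x ^ 2))
      ≤ Real.sqrt (2 * b) * (2/3 * ((b-a) * Real.sqrt (b-a))) := by
    calc (∫ x in a..b, Real.sqrt (ψ - x ^ 2))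
        ≤ ∫ x in a..b, Real.sqrt (2 * b) * Real.sqrt (b - x) :=
          intervalIntegral.integral_mono_on hab int1 int3 keyhigh
      _ = _ := by rw [intervalIntegral.integral_const_mul, integral_sqrt_sub hab]
  rw [G16_eval hε h1 h2, ← ha, ← hb]
  constructor
  · have e : Real.sqrt (a+b) * (2/3 * ((b-a) * Real.sqrt (b-a))) / ε = 2/3 * ε^2 / (a+b) := by
      rw [hsba, hba]
      field_simp
    rw [← e]
    gcongr
  · have e : Real.sqrt (2*b) * (2/3 * ((b-a) * Real.sqrt (b-a))) / ε
        = 2/3 * ε^2 * Real.sqrt (2*b) / ((a+b) * Real.sqrt (a+b)) := by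
      rw [hsba, hba]
      field_simp
    rw [← e]
    gcongr


lemma G16_le_sqrt {ε ψ : ℝ} (hε : 0 < ε) (hψ0 : 0 < ψ) (hψ1 : ψ ≤ 1) :
    G16 ε ψ ≤ Real.sqrt ψ := by
  set b := Real.sqrt ψ with hb
  have hb0 : 0 < b := Real.sqrt_pos.2 hψ0
  have hb1 : b ≤ 1 := by
    rw [hb, show (1:ℝ) = Real.sqrt 1 by simp]
    exact Real.sqrt_le_sqrt hψ1
  have hb2 : b ^ 2 = ψ := Real.sq_sqrt hψ0.le
  have hi : ∀ u v : ℝ,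
      IntervalIntegrable (fun x => min (Real.sqrt (max (ψ - x ^ 2) 0) / ε) 1) volume u v :=
    fun u v => (f16_cont ε ψ).intervalIntegrable u v
  have e1 : (∫ x in (0:ℝ)..1, min (Real.sqrt (max (ψ - x ^ 2) 0) / ε) 1)
      = (∫ x in (0:ℝ)..b, min (Real.sqrt (max (ψ - x ^ 2) 0) / ε) 1)
        + (∫ x in b..(1:ℝ), min (Real.sqrt (max (ψ - x ^ 2) 0) / ε) 1) :=
    (intervalIntegral.integral_add_adjacent_intervals (hi 0 b) (hi b 1)).symm
  have p3 : (∫ x in b..(1:ℝ), min (Real.sqrt (max (ψ - x ^ 2) 0) / ε) 1) = 0 := by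
    rw [intervalIntegral.integral_congr (g := fun _ => (0:ℝ)) ?_]
    · simp
    · intro x hx
      rw [Set.uIcc_of_le hb1] at hx
      have h' : ψ - x ^ 2 ≤ 0 := by nlinarith [hx.1, hb0.le]
      simp [max_eq_right h', hε.le]
  have p1 : (∫ x in (0:ℝ)..b, min (Real.sqrt (max (ψ - x ^ 2) 0) / ε) 1) ≤ b := by
    calc (∫ x in (0:ℝ)..b, min (Real.sqrt (max (ψ - x ^ 2) 0) / ε) 1)
        ≤ ∫ _x in (0:ℝ)..b, (1:ℝ) :=
          intervalIntegral.integral_mono_on hb0.le (hi 0 b)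
            (by apply intervalIntegrable_const)
            (fun x _ => min_le_right _ _)
      _ = b := by simp
  rw [G16_interval, e1, p3, add_zero]
  exact p1

lemma le_G16 {ε ψ : ℝ} (hε : 0 < ε) (h : ε ^ 2 ≤ ψ) :
    min (Real.sqrt (ψ - ε ^ 2)) 1 ≤ G16 ε ψ := by
  set a := Real.sqrt (ψ - ε ^ 2) with ha
  set c := min a 1 with hc
  have ha0 : 0 ≤ a := Real.sqrt_nonneg _
  have hc0 : 0 ≤ c := le_min ha0 (by norm_num)
  have hc1 : c ≤ 1 := min_le_right _ _
  have hca : c ≤ a := min_le_left _ _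
  have ha2 : a ^ 2 = ψ - ε ^ 2 := Real.sq_sqrt (by linarith)
  have hi : ∀ u v : ℝ,
      IntervalIntegrable (fun x => min (Real.sqrt (max (ψ - x ^ 2) 0) / ε) 1) volume u v :=
    fun u v => (f16_cont ε ψ).intervalIntegrable u v
  have e1 : (∫ x in (0:ℝ)..1, min (Real.sqrt (max (ψ - x ^ 2) 0) / ε) 1)
      = (∫ x in (0:ℝ)..c, min (Real.sqrt (max (ψ - x ^ 2) 0) / ε) 1)
        + (∫ x in c..(1:ℝ), min (Real.sqrt (max (ψ - x ^ 2) 0) / ε) 1) :=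
    (intervalIntegral.integral_add_adjacent_intervals (hi 0 c) (hi c 1)).symm
  have p1 : (∫ x in (0:ℝ)..c, min (Real.sqrt (max (ψ - x ^ 2) 0) / ε) 1) = c := by
    rw [intervalIntegral.integral_congr (g := fun _ => (1:ℝ)) ?_]
    · simp
    · intro x hx
      rw [Set.uIcc_of_le hc0] at hx
      have h' : ε ^ 2 ≤ ψ - x ^ 2 := by nlinarith [hx.1, hx.2]
      have h'' : ε ≤ Real.sqrt (ψ - x ^ 2) := by
        rw [show ε = Real.sqrt (ε ^ 2) by rw [Real.sqrt_sq hε.le]]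
        exact Real.sqrt_le_sqrt h'
      have hmax : max (ψ - x ^ 2) 0 = ψ - x ^ 2 := max_eq_left (by nlinarith)
      simp only [hmax]
      exact min_eq_right ((one_le_div hε).2 h'')
  have p2 : (0:ℝ) ≤ ∫ x in c..(1:ℝ), min (Real.sqrt (max (ψ - x ^ 2) 0) / ε) 1 := by
    apply intervalIntegral.integral_nonneg hc1
    intro x _
    have : 0 ≤ Real.sqrt (max (ψ - x ^ 2) 0) / ε := by positivity
    exact le_min this (by norm_num)
  rw [G16_interval, e1, p1]
  linarith

lemma sol_mem {ε ψ : ℝ} (hε : 0 < ε) (hε4 : ε < 1/4) (hψ : 0 < ψ)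
    (h : G16 ε ψ = 1/2) : ψ ∈ Set.Icc (1/4 : ℝ) (1/4 + ε ^ 2) := by
  have hε2 : ε ^ 2 < 1/4 := by nlinarith
  constructor
  · by_contra hlt
    push_neg at hlt
    have h1 : G16 ε ψ ≤ Real.sqrt ψ := G16_le_sqrt hε hψ (by linarith)
    have h2 : Real.sqrt ψ < Real.sqrt (1/4) := Real.sqrt_lt_sqrt hψ.le hlt
    have h3 : Real.sqrt (1/4 : ℝ) = 1/2 := by
      rw [show (1/4:ℝ) = (1/2)^2 by norm_num, Real.sqrt_sq (by norm_num)]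
    rw [h3] at h2
    rw [h] at h1
    linarith
  · by_contra hlt
    push_neg at hlt
    have h1 : min (Real.sqrt (ψ - ε ^ 2)) 1 ≤ G16 ε ψ := le_G16 hε (by linarith)
    have h2 : Real.sqrt (1/4) < Real.sqrt (ψ - ε ^ 2) :=
      Real.sqrt_lt_sqrt (by norm_num) (by linarith)
    have h3 : Real.sqrt (1/4 : ℝ) = 1/2 := by
      rw [show (1/4:ℝ) = (1/2)^2 by norm_num, Real.sqrt_sq (by norm_num)]
    rw [h3] at h2
    have : (1/2 : ℝ) < min (Real.sqrt (ψ - ε ^ 2)) 1 := lt_min h2 (by norm_num)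
    rw [h] at h1
    linarith

lemma exists_sol {ε : ℝ} (hε : 0 < ε) (hε4 : ε < 1/4) :
    ∃ ψ ∈ Set.Icc (1/4 : ℝ) (1/4 + ε ^ 2), G16 ε ψ = 1/2 := by
  have h3 : Real.sqrt (1/4 : ℝ) = 1/2 := by
    rw [show (1/4:ℝ) = (1/2)^2 by norm_num, Real.sqrt_sq (by norm_num)]
  have hε2 : ε ^ 2 < 1/4 := by nlinarith
  have hlow : G16 ε (1/4) ≤ 1/2 := by
    have := G16_le_sqrt hε (by norm_num : (0:ℝ) < 1/4) (by norm_num)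
    rwa [h3] at this
  have hhigh : 1/2 ≤ G16 ε (1/4 + ε ^ 2) := by
    have := le_G16 hε (by nlinarith : ε ^ 2 ≤ 1/4 + ε ^ 2)
    have e : (1/4 : ℝ) + ε ^ 2 - ε ^ 2 = 1/4 := by ring
    rw [e, h3] at this
    rw [min_eq_left (by norm_num : (1/2:ℝ) ≤ 1)] at this
    exact this
  have hsub : Set.Icc (G16 ε (1/4)) (G16 ε (1/4 + ε^2)) ⊆ G16 ε '' Set.Icc (1/4) (1/4 + ε^2) :=
    intermediate_value_Icc (by nlinarith) (G16_continuous ε).continuousOn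
  obtain ⟨ψ, hψmem, hψeq⟩ := hsub ⟨hlow, hhigh⟩
  exact ⟨ψ, hψmem, hψeq⟩

lemma G16_strictMonoOn {ε : ℝ} (hε : 0 < ε) (hε4 : ε < 1/4) :
    StrictMonoOn (G16 ε) (Set.Icc (1/4 : ℝ) (1/4 + ε ^ 2)) := by
  intro ψ₁ h₁ ψ₂ h₂ hlt
  have hε2 : ε ^ 2 < 1/4 := by nlinarith
  have hψ₁0 : 0 < ψ₁ := by have := h₁.1; linarith
  have hψ₂0 : 0 < ψ₂ := by have := h₂.1; linarith
  set a₁ := Real.sqrt (ψ₁ - ε ^ 2) with ha₁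
  set b₂ := Real.sqrt ψ₂ with hb₂
  have ha₁0 : 0 ≤ a₁ := Real.sqrt_nonneg _
  have ha₁2 : a₁ ^ 2 = ψ₁ - ε ^ 2 := Real.sq_sqrt (by have := h₁.1; linarith)
  have hb₂2 : b₂ ^ 2 = ψ₂ := Real.sq_sqrt hψ₂0.le
  have hq : Real.sqrt (1/4 : ℝ) = 1/2 := by
    rw [show (1/4:ℝ) = (1/2)^2 by norm_num, Real.sqrt_sq (by norm_num)]
  have ha₁le : a₁ ≤ 1/2 := by
    rw [ha₁, ← hq]
    exact Real.sqrt_le_sqrt (by have := h₁.2; linarith)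
  have hsqpos : 0 < ε ^ 2 := by positivity
  have ha₁b₂ : a₁ < b₂ := Real.sqrt_lt_sqrt (by have := h₁.1; linarith) (by linarith)
  set m := min b₂ 1 with hm
  have ham : a₁ < m := lt_min ha₁b₂ (by linarith)
  set x₀ := (a₁ + m)/2 with hx₀
  have hx₀1 : x₀ < m := by rw [hx₀]; linarith
  have hx₀2 : a₁ < x₀ := by rw [hx₀]; linarith
  have hx₀0 : 0 ≤ x₀ := le_trans ha₁0 hx₀2.le
  have hx₀le1 : x₀ ≤ 1 := le_trans hx₀1.le (min_le_right _ _)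
  have hx₀b₂ : x₀ < b₂ := lt_of_lt_of_le hx₀1 (min_le_left _ _)
  rw [G16_interval, G16_interval]
  apply intervalIntegral.integral_lt_integral_of_continuousOn_of_le_of_exists_lt
    (by norm_num) (f16_cont ε ψ₁).continuousOn (f16_cont ε ψ₂).continuousOn
  · intro x _
    have hmax : max (ψ₁ - x ^ 2) 0 ≤ max (ψ₂ - x ^ 2) 0 :=
      max_le_max (by linarith) le_rfl
    exact min_le_min (div_le_div_of_nonneg_right (Real.sqrt_le_sqrt hmax) hε.le) le_rfl
  · refine ⟨x₀, ⟨hx₀0, hx₀le1⟩, ?_⟩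
    have hlt1 : ψ₁ - x₀ ^ 2 < ε ^ 2 := by nlinarith [hx₀2, ha₁2]
    have hmax1 : max (ψ₁ - x₀ ^ 2) 0 < ε ^ 2 := by
      apply max_lt hlt1 (by positivity)
    have hs1 : Real.sqrt (max (ψ₁ - x₀ ^ 2) 0) < ε := by
      rw [show ε = Real.sqrt (ε ^ 2) by rw [Real.sqrt_sq hε.le]]
      exact Real.sqrt_lt_sqrt (le_max_right _ _) hmax1
    have hlt2 : max (ψ₁ - x₀ ^ 2) 0 < ψ₂ - x₀ ^ 2 := by
      apply max_lt (by linarith) (by nlinarith [hx₀b₂, hb₂2])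
    have hmax2 : max (ψ₂ - x₀ ^ 2) 0 = ψ₂ - x₀ ^ 2 :=
      max_eq_left (by nlinarith [hx₀b₂, hb₂2])
    have hs2 : Real.sqrt (max (ψ₁ - x₀ ^ 2) 0) < Real.sqrt (max (ψ₂ - x₀ ^ 2) 0) := by
      rw [hmax2]
      exact Real.sqrt_lt_sqrt (le_max_right _ _) hlt2
    have hh1 : min (Real.sqrt (max (ψ₁ - x₀ ^ 2) 0) / ε) 1
        = Real.sqrt (max (ψ₁ - x₀ ^ 2) 0) / ε :=
      min_eq_left (le_of_lt ((div_lt_one hε).2 hs1))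
    rw [hh1]
    apply lt_min
    · exact (div_lt_div_iff_of_pos_right hε).2 hs2
    · exact (div_lt_one hε).2 hs1

lemma sqrt_quarter : Real.sqrt (1/4 : ℝ) = 1/2 := by
  rw [show (1/4:ℝ) = (1/2)^2 by norm_num, Real.sqrt_sq (by norm_num)]

lemma tendsto_sqrt_aux (k : ℝ) :
    Tendsto (fun ε : ℝ => Real.sqrt (1/4 + k * ε ^ 2)) (nhds 0) (nhds (1/2)) := by
  have hcont : Continuous fun ε : ℝ => Real.sqrt (1/4 + k * ε ^ 2) := by fun_prop
  have h := hcont.tendsto 0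
  have he : Real.sqrt (1/4 + k * (0:ℝ) ^ 2) = 1/2 := by
    rw [show (1/4:ℝ) + k * (0:ℝ) ^ 2 = 1/4 by ring, sqrt_quarter]
  rwa [he] at h

lemma tendsto_Q_lower (c : ℝ) :
    Tendsto (fun ε : ℝ => (c - 1) / (Real.sqrt (1/4 + (c-1) * ε ^ 2) + 1/2)
      + 2/3 / (Real.sqrt (1/4 + (c-1) * ε ^ 2) + Real.sqrt (1/4 + c * ε ^ 2)))
      (nhds (0:ℝ)) (nhds (c - 1/3)) := by
  have t1 := tendsto_sqrt_aux (c - 1)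
  have t2 := tendsto_sqrt_aux c
  have h1 : Tendsto (fun ε : ℝ => (c - 1) / (Real.sqrt (1/4 + (c-1) * ε ^ 2) + 1/2))
      (nhds (0:ℝ)) (nhds ((c-1)/1)) := by
    apply Tendsto.div tendsto_const_nhds
    · have h := t1.add (tendsto_const_nhds (x := (1/2:ℝ)))
      norm_num at h ⊢
      exact h
    · norm_num
  have h2 : Tendsto (fun ε : ℝ => (2:ℝ)/3 / (Real.sqrt (1/4 + (c-1) * ε ^ 2)
      + Real.sqrt (1/4 + c * ε ^ 2))) (nhds (0:ℝ)) (nhds ((2/3)/1)) := by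
    apply Tendsto.div tendsto_const_nhds
    · have h := t1.add t2
      norm_num at h ⊢
      exact h
    · norm_num
  have := h1.add h2
  have he : (c-1)/1 + (2:ℝ)/3/1 = c - 1/3 := by ring
  rwa [he] at this

lemma tendsto_Q_upper (c : ℝ) :
    Tendsto (fun ε : ℝ => (c - 1) / (Real.sqrt (1/4 + (c-1) * ε ^ 2) + 1/2)
      + 2/3 * Real.sqrt (2 * Real.sqrt (1/4 + c * ε ^ 2)) /
        ((Real.sqrt (1/4 + (c-1) * ε ^ 2) + Real.sqrt (1/4 + c * ε ^ 2)) *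
          Real.sqrt (Real.sqrt (1/4 + (c-1) * ε ^ 2) + Real.sqrt (1/4 + c * ε ^ 2))))
      (nhds (0:ℝ)) (nhds (c - 1/3)) := by
  have t1 := tendsto_sqrt_aux (c - 1)
  have t2 := tendsto_sqrt_aux c
  have h1 : Tendsto (fun ε : ℝ => (c - 1) / (Real.sqrt (1/4 + (c-1) * ε ^ 2) + 1/2))
      (nhds (0:ℝ)) (nhds ((c-1)/1)) := by
    apply Tendsto.div tendsto_const_nhds
    · have h := t1.add (tendsto_const_nhds (x := (1/2:ℝ)))
      norm_num at h ⊢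
      exact h
    · norm_num
  have hs : Tendsto (fun ε : ℝ => Real.sqrt (1/4 + (c-1) * ε ^ 2)
      + Real.sqrt (1/4 + c * ε ^ 2)) (nhds (0:ℝ)) (nhds 1) := by
    have h := t1.add t2
    norm_num at h ⊢
    exact h
  have hnum : Tendsto (fun ε : ℝ => (2:ℝ)/3 * Real.sqrt (2 * Real.sqrt (1/4 + c * ε ^ 2)))
      (nhds (0:ℝ)) (nhds (2/3)) := by
    have := ((tendsto_const_nhds (x := (2:ℝ))).mul t2).sqrt
    have h' := (tendsto_const_nhds (x := (2:ℝ)/3)).mul this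
    have he : (2:ℝ)/3 * Real.sqrt (2 * (1/2)) = 2/3 := by norm_num
    rwa [he] at h'
  have hden : Tendsto (fun ε : ℝ => (Real.sqrt (1/4 + (c-1) * ε ^ 2)
      + Real.sqrt (1/4 + c * ε ^ 2)) * Real.sqrt (Real.sqrt (1/4 + (c-1) * ε ^ 2)
      + Real.sqrt (1/4 + c * ε ^ 2))) (nhds (0:ℝ)) (nhds 1) := by
    have h := hs.mul hs.sqrt
    have he : (1:ℝ) * Real.sqrt 1 = 1 := by norm_num
    rwa [he] at h
  have h2 := hnum.div hden (by norm_num)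
  have := h1.add h2
  have he : (c-1)/1 + (2:ℝ)/3/1 = c - 1/3 := by ring
  rwa [he] at this

lemma rationalize {c ε : ℝ} (h : 0 ≤ 1/4 + (c-1) * ε ^ 2) :
    Real.sqrt (1/4 + (c-1) * ε ^ 2)
      = 1/2 + ε ^ 2 * ((c-1) / (Real.sqrt (1/4 + (c-1) * ε ^ 2) + 1/2)) := by
  set a := Real.sqrt (1/4 + (c-1) * ε ^ 2) with ha
  have ha0 : 0 ≤ a := Real.sqrt_nonneg _
  have ha2 : a ^ 2 = 1/4 + (c-1) * ε ^ 2 := Real.sq_sqrt h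
  have hden : a + 1/2 > 0 := by linarith
  field_simp
  nlinarith [ha2]

lemma eventually_G16_gt {c : ℝ} (hc : 1/3 < c) (hc1 : c ≤ 1) :
    ∀ᶠ ε in nhdsWithin (0:ℝ) (Set.Ioi 0), 1/2 < G16 ε (1/4 + c * ε ^ 2) := by
  have hQ : ∀ᶠ ε in nhdsWithin (0:ℝ) (Set.Ioi 0),
      0 < (c - 1) / (Real.sqrt (1/4 + (c-1) * ε ^ 2) + 1/2)
        + 2/3 / (Real.sqrt (1/4 + (c-1) * ε ^ 2) + Real.sqrt (1/4 + c * ε ^ 2)) :=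
    ((tendsto_Q_lower c).mono_left nhdsWithin_le_nhds).eventually
      (eventually_gt_nhds (by linarith))
  have hball : Set.Ioo (0:ℝ) (1/4) ∈ nhdsWithin (0:ℝ) (Set.Ioi 0) :=
    Ioo_mem_nhdsGT_of_mem ⟨le_refl 0, by norm_num⟩
  filter_upwards [hQ, hball] with ε hQε hεball
  obtain ⟨hε, hε4⟩ := hεball
  have hε2 : ε ^ 2 < 1/4 := by nlinarith
  have hψ1 : 1/4 + c * ε ^ 2 ≤ 1 := by
    nlinarith [mul_nonneg (by linarith : (0:ℝ) ≤ 1 - c) (sq_nonneg ε)]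
  have hψε : ε ^ 2 < 1/4 + c * ε ^ 2 := by
    nlinarith [mul_nonneg (by linarith : (0:ℝ) ≤ c) (sq_nonneg ε)]
  have hlow := (G16_bounds hε hψε hψ1).1
  have hsub : 1/4 + c * ε ^ 2 - ε ^ 2 = 1/4 + (c-1) * ε ^ 2 := by ring
  rw [hsub] at hlow
  have hrat := rationalize (c := c) (ε := ε) (by linarith)
  have hεsq : 0 < ε ^ 2 := by positivity
  calc (1:ℝ)/2 < 1/2 + ε ^ 2 * ((c - 1) / (Real.sqrt (1/4 + (c-1) * ε ^ 2) + 1/2)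
        + 2/3 / (Real.sqrt (1/4 + (c-1) * ε ^ 2) + Real.sqrt (1/4 + c * ε ^ 2))) := by
        nlinarith [mul_pos hεsq hQε]
    _ = Real.sqrt (1/4 + (c-1) * ε ^ 2)
        + 2/3 * ε ^ 2 / (Real.sqrt (1/4 + (c-1) * ε ^ 2) + Real.sqrt (1/4 + c * ε ^ 2)) := by
        linear_combination -hrat
    _ ≤ _ := hlow

lemma eventually_G16_lt {c : ℝ} (hc0 : 0 ≤ c) (hc : c < 1/3) :
    ∀ᶠ ε in nhdsWithin (0:ℝ) (Set.Ioi 0), G16 ε (1/4 + c * ε ^ 2) < 1/2 := by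
  have hQ : ∀ᶠ ε in nhdsWithin (0:ℝ) (Set.Ioi 0),
      (c - 1) / (Real.sqrt (1/4 + (c-1) * ε ^ 2) + 1/2)
        + 2/3 * Real.sqrt (2 * Real.sqrt (1/4 + c * ε ^ 2)) /
          ((Real.sqrt (1/4 + (c-1) * ε ^ 2) + Real.sqrt (1/4 + c * ε ^ 2)) *
            Real.sqrt (Real.sqrt (1/4 + (c-1) * ε ^ 2) + Real.sqrt (1/4 + c * ε ^ 2))) < 0 :=
    ((tendsto_Q_upper c).mono_left nhdsWithin_le_nhds).eventually
      (eventually_lt_nhds (by linarith))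
  have hball : Set.Ioo (0:ℝ) (1/4) ∈ nhdsWithin (0:ℝ) (Set.Ioi 0) :=
    Ioo_mem_nhdsGT_of_mem ⟨le_refl 0, by norm_num⟩
  filter_upwards [hQ, hball] with ε hQε hεball
  obtain ⟨hε, hε4⟩ := hεball
  have hε2 : ε ^ 2 < 1/4 := by nlinarith
  have hψ1 : 1/4 + c * ε ^ 2 ≤ 1 := by
    nlinarith [mul_nonneg (by linarith : (0:ℝ) ≤ 1 - c) (sq_nonneg ε)]
  have hψε : ε ^ 2 < 1/4 + c * ε ^ 2 := by
    nlinarith [mul_nonneg hc0 (sq_nonneg ε)]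
  have hhigh := (G16_bounds hε hψε hψ1).2
  have hsub : 1/4 + c * ε ^ 2 - ε ^ 2 = 1/4 + (c-1) * ε ^ 2 := by ring
  rw [hsub] at hhigh
  have hrat := rationalize (c := c) (ε := ε) (by linarith)
  have hεsq : 0 < ε ^ 2 := by positivity
  calc G16 ε (1/4 + c * ε ^ 2)
      ≤ Real.sqrt (1/4 + (c-1) * ε ^ 2)
        + 2/3 * ε ^ 2 * Real.sqrt (2 * Real.sqrt (1/4 + c * ε ^ 2)) /
          ((Real.sqrt (1/4 + (c-1) * ε ^ 2) + Real.sqrt (1/4 + c * ε ^ 2)) *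
            Real.sqrt (Real.sqrt (1/4 + (c-1) * ε ^ 2) + Real.sqrt (1/4 + c * ε ^ 2))) := hhigh
    _ = 1/2 + ε ^ 2 * ((c - 1) / (Real.sqrt (1/4 + (c-1) * ε ^ 2) + 1/2)
        + 2/3 * Real.sqrt (2 * Real.sqrt (1/4 + c * ε ^ 2)) /
          ((Real.sqrt (1/4 + (c-1) * ε ^ 2) + Real.sqrt (1/4 + c * ε ^ 2)) *
            Real.sqrt (Real.sqrt (1/4 + (c-1) * ε ^ 2) + Real.sqrt (1/4 + c * ε ^ 2)))) := by
        linear_combination hrat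
    _ < 1/2 := by nlinarith [mul_neg_of_pos_of_neg hεsq hQε]

open Classical in
def Psi16 (ε : ℝ) : ℝ :=
  if h : ∃ ψ ∈ Set.Icc (1/4 : ℝ) (1/4 + ε ^ 2), G16 ε ψ = 1/2 then h.choose else 1/4

lemma Psi16_spec {ε : ℝ} (hε : 0 < ε) (hε4 : ε < 1/4) :
    Psi16 ε ∈ Set.Icc (1/4 : ℝ) (1/4 + ε ^ 2) ∧ G16 ε (Psi16 ε) = 1/2 := by
  have h := exists_sol hε hε4
  rw [Psi16, dif_pos h]
  exact h.choose_spec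

/-- for all sufficiently small `ε > 0` there is a unique `ψ^ε > 0` with
`G^ε(ψ^ε) = 1/2`, and as `ε → 0⁺` one has `ψ^ε → 1/4` and `(ψ^ε − 1/4)/ε² → 1/3`;
in particular the quadratic convergence rate is tight. -/
theorem stmt16 :
    ∃ ε₁ : ℝ, 0 < ε₁ ∧
      ∃ Ψ : ℝ → ℝ,
        (∀ ε ∈ Set.Ioo (0 : ℝ) ε₁,
          0 < Ψ ε ∧ G16 ε (Ψ ε) = 1 / 2 ∧
          ∀ ψ' : ℝ, 0 < ψ' → G16 ε ψ' = 1 / 2 → ψ' = Ψ ε) ∧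
        Filter.Tendsto Ψ (nhdsWithin 0 (Set.Ioi 0)) (nhds (1 / 4)) ∧
        Filter.Tendsto (fun ε => (Ψ ε - 1 / 4) / ε ^ 2) (nhdsWithin 0 (Set.Ioi 0))
          (nhds (1 / 3)) := by
  refine ⟨1/4, by norm_num, Psi16, ?_, ?_, ?_⟩
  · rintro ε ⟨hε, hε4⟩
    obtain ⟨hmem, heq⟩ := Psi16_spec hε hε4
    refine ⟨by have := hmem.1; linarith, heq, ?_⟩
    intro ψ' hψ' hG
    have hm' := sol_mem hε hε4 hψ' hG
    exact (G16_strictMonoOn hε hε4).injOn hm' hmem (hG.trans heq.symm)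
  · have hbound : ∀ᶠ ε in nhdsWithin (0:ℝ) (Set.Ioi 0),
        Psi16 ε ∈ Set.Icc (1/4 : ℝ) (1/4 + ε ^ 2) := by
      have hball : Set.Ioo (0:ℝ) (1/4) ∈ nhdsWithin (0:ℝ) (Set.Ioi 0) :=
        Ioo_mem_nhdsGT_of_mem ⟨le_refl 0, by norm_num⟩
      filter_upwards [hball] with ε hεb
      exact (Psi16_spec hεb.1 hεb.2).1
    have hub : Tendsto (fun ε : ℝ => 1/4 + ε ^ 2) (nhdsWithin (0:ℝ) (Set.Ioi 0))
        (nhds (1/4)) := by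
      have h : Tendsto (fun ε : ℝ => 1/4 + ε ^ 2) (nhds (0:ℝ)) (nhds (1/4 + (0:ℝ) ^ 2)) :=
        Continuous.tendsto (by fun_prop) 0
      norm_num at h
      exact h.mono_left nhdsWithin_le_nhds
    exact tendsto_of_tendsto_of_tendsto_of_le_of_le' tendsto_const_nhds hub
      (hbound.mono fun ε h => h.1) (hbound.mono fun ε h => h.2)
  · rw [Metric.tendsto_nhds]
    intro η hη
    set η' := min η (1/6) with hη'def
    have hη'pos : 0 < η' := lt_min hη (by norm_num)
    have hη'le : η' ≤ η := min_le_left _ _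
    have hη'6 : η' ≤ 1/6 := min_le_right _ _
    have hc₁ : (0:ℝ) ≤ 1/3 - η'/2 := by linarith
    have hc₁' : 1/3 - η'/2 < 1/3 := by linarith
    have hc₂ : (1:ℝ)/3 < 1/3 + η'/2 := by linarith
    have hc₂' : 1/3 + η'/2 ≤ 1 := by linarith
    have hball : Set.Ioo (0:ℝ) (1/4) ∈ nhdsWithin (0:ℝ) (Set.Ioi 0) :=
      Ioo_mem_nhdsGT_of_mem ⟨le_refl 0, by norm_num⟩
    filter_upwards [hball, eventually_G16_lt hc₁ hc₁', eventually_G16_gt hc₂ hc₂']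
      with ε hεb hGlt hGgt
    obtain ⟨hε, hε4⟩ := hεb
    have hεsq : 0 < ε ^ 2 := by positivity
    obtain ⟨hmem, heq⟩ := Psi16_spec hε hε4
    have hmono := G16_strictMonoOn hε hε4
    -- upper bound
    have hup : Psi16 ε ≤ 1/4 + (1/3 + η'/2) * ε ^ 2 := by
      by_contra hcon
      push_neg at hcon
      have hmem₂ : (1/4 : ℝ) + (1/3 + η'/2) * ε ^ 2 ∈ Set.Icc (1/4 : ℝ) (1/4 + ε ^ 2) := by
        constructor
        · nlinarith
        · nlinarith
      have := hmono hmem₂ hmem hcon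
      rw [heq] at this
      linarith
    -- lower bound
    have hlo : 1/4 + (1/3 - η'/2) * ε ^ 2 ≤ Psi16 ε := by
      by_contra hcon
      push_neg at hcon
      have hmem₁ : (1/4 : ℝ) + (1/3 - η'/2) * ε ^ 2 ∈ Set.Icc (1/4 : ℝ) (1/4 + ε ^ 2) := by
        constructor
        · nlinarith
        · nlinarith
      have := hmono hmem hmem₁ hcon
      rw [heq] at this
      linarith
    have h1 : 1/3 - η'/2 ≤ (Psi16 ε - 1/4) / ε ^ 2 := by
      rw [le_div_iff₀ hεsq]
      linarith
    have h2 : (Psi16 ε - 1/4) / ε ^ 2 ≤ 1/3 + η'/2 := by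
      rw [div_le_iff₀ hεsq]
      linarith
    rw [Real.dist_eq, abs_lt]
    constructor <;> linarith
end
end

section
/- Let M be a real symmetric (N+1)×(N+1) matrix (rows and columns indexed by 0,…,N) with M𝟙 = 0, and suppose that vᵀ M v ≥ λ ‖v‖² for some λ ≥ 0 and all v ∈ ℝ^{N+1} orthogonal to the all-ones vector 𝟙. Let M̃ be the N×N submatrix obtained by deleting the row and column of index 0. Then uᵀ M̃ u ≥ (λ/(N+1)) ‖u‖² for every u ∈ ℝ^N; in particular the smallest eigenvalue of M̃ is at least λ₁(M)/(N+1). -/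
open MeasureTheory Real Filter Set

noncomputable section

/-- The second smallest eigenvalue of a Laplacian matrix, i.e. the infimum of the
quadratic form `vᵀ A v` over unit vectors `v` orthogonal to the all-ones vector. -/
def lam1 {n : ℕ} (A : Matrix (Fin n) (Fin n) ℝ) : ℝ :=
  sInf {r : ℝ | ∃ v : Fin n → ℝ, (∑ i, (v i) ^ 2) = 1 ∧ (∑ i, v i) = 0 ∧
    r = ∑ i, ∑ j, v i * A i j * v j}

/-- The smallest eigenvalue of a symmetric matrix, i.e. the infimum of the quadratic
form over unit vectors. -/
def lamMin {n : ℕ} (A : Matrix (Fin n) (Fin n) ℝ) : ℝ :=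
  sInf {r : ℝ | ∃ u : Fin n → ℝ, (∑ i, (u i) ^ 2) = 1 ∧
    r = ∑ i, ∑ j, u i * A i j * u j}

/-- Key step: the quadratic-form bound for the submatrix. -/
lemma key_stmt18 {N : ℕ} (M : Matrix (Fin (N + 1)) (Fin (N + 1)) ℝ) (hMs : M.IsSymm)
    (hM1 : ∀ i, ∑ j, M i j = 0) (lam : ℝ) (hlam : 0 ≤ lam)
    (hbound : ∀ v : Fin (N + 1) → ℝ, (∑ i, v i) = 0 →
      lam * (∑ i, (v i) ^ 2) ≤ ∑ i, ∑ j, v i * M i j * v j) (u : Fin N → ℝ) :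
    (lam / ((N : ℝ) + 1)) * (∑ i, (u i) ^ 2) ≤
      ∑ i, ∑ j, u i * M i.succ j.succ * u j := by
  have hN1 : (0:ℝ) < (N : ℝ) + 1 := by positivity
  set s : ℝ := ∑ i, u i with hs
  set Q : ℝ := ∑ i, (u i)^2 with hQ
  set c : ℝ := -s / ((N : ℝ) + 1) with hc
  set w : Fin (N+1) → ℝ := Fin.cons 0 u with hw
  set v : Fin (N+1) → ℝ := fun i => w i + c with hv
  have hsw : ∑ i, w i = s := by
    rw [hw, Fin.sum_univ_succ]; simp [hs]
  have hsumv : ∑ i, v i = 0 := by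
    simp only [hv]
    rw [Finset.sum_add_distrib, hsw, Finset.sum_const, Finset.card_univ, Fintype.card_fin, hc]
    simp only [nsmul_eq_mul, Nat.cast_add, Nat.cast_one]
    field_simp
    ring
  have hcol : ∀ j, ∑ i, M i j = 0 := by
    intro j
    have h1 : ∑ i, M i j = ∑ i, M j i :=
      Finset.sum_congr rfl (fun i _ => (hMs.apply i j).symm)
    rw [h1]; exact hM1 j
  have hq : ∑ i, ∑ j, v i * M i j * v j = ∑ i, ∑ j, w i * M i j * w j := by
    simp only [hv]
    have expand : ∀ i, ∑ j, (w i + c) * M i j * (w j + c)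
        = (∑ j, w i * M i j * w j) + c * ∑ j, M i j * w j := by
      intro i
      have e1 : ∀ j, (w i + c) * M i j * (w j + c)
          = w i * M i j * w j + c * (M i j * w j) + (w i + c) * c * M i j := by
        intro j; ring
      rw [Finset.sum_congr rfl (fun j _ => e1 j), Finset.sum_add_distrib,
        Finset.sum_add_distrib, ← Finset.mul_sum, ← Finset.mul_sum, hM1 i]
      ring
    have hz : ∑ i : Fin (N+1), ∑ j, M i j * w j = 0 := by
      rw [Finset.sum_comm]
      exact Finset.sum_eq_zero (fun j _ => by rw [← Finset.sum_mul, hcol j, zero_mul])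
    rw [Finset.sum_congr rfl (fun i _ => expand i), Finset.sum_add_distrib,
      ← Finset.mul_sum, hz]
    ring
  have hw0 : ∑ i, ∑ j, w i * M i j * w j = ∑ i, ∑ j, u i * M i.succ j.succ * u j := by
    rw [Fin.sum_univ_succ]
    simp only [hw, Fin.cons_zero, Fin.cons_succ, zero_mul, Finset.sum_const_zero, zero_add]
    refine Finset.sum_congr rfl (fun i _ => ?_)
    rw [Fin.sum_univ_succ]
    simp [Fin.cons_zero, Fin.cons_succ]
  have hnorm : ∑ i, (v i)^2 = Q - s^2 / ((N : ℝ) + 1) := by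
    simp only [hv]
    have e1 : ∀ i : Fin (N+1), (w i + c)^2 = w i ^ 2 + 2*c*w i + c^2 := fun i => by ring
    rw [Finset.sum_congr rfl (fun i _ => e1 i), Finset.sum_add_distrib, Finset.sum_add_distrib,
      ← Finset.mul_sum, hsw, Finset.sum_const, Finset.card_univ, Fintype.card_fin]
    have hw2 : ∑ i, (w i)^2 = Q := by
      rw [hw, Fin.sum_univ_succ]; simp [hQ]
    rw [hw2, hc]
    simp only [nsmul_eq_mul, Nat.cast_add, Nat.cast_one]
    field_simp
    ring
  have hb := hbound v hsumv
  rw [hnorm, hq, hw0] at hb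
  have hcs : s^2 ≤ (N : ℝ) * Q := by
    have := sq_sum_le_card_mul_sum_sq (s := (Finset.univ : Finset (Fin N))) (f := u)
    simpa [hs, hQ] using this
  refine le_trans ?_ hb
  rw [div_mul_eq_mul_div, div_le_iff₀ hN1]
  have e2 : lam * (Q - s^2/((N:ℝ)+1)) * ((N:ℝ)+1) = lam * (Q * ((N:ℝ)+1) - s^2) := by
    field_simp
  rw [e2]
  nlinarith [mul_nonneg hlam (sub_nonneg.2 hcs)]

/-- if `M` is symmetric with `M𝟙 = 0` and `vᵀMv ≥ λ‖v‖²` for all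
`v ⟂ 𝟙`, then the submatrix `M̃` obtained by deleting row and column `0` satisfies
`uᵀ M̃ u ≥ (λ/(N+1))‖u‖²` for every `u`; in particular its smallest eigenvalue is at
least `λ₁(M)/(N+1)`. -/
theorem stmt18 {N : ℕ} (M : Matrix (Fin (N + 1)) (Fin (N + 1)) ℝ) (hMs : M.IsSymm)
    (hM1 : ∀ i, ∑ j, M i j = 0) (lam : ℝ) (hlam : 0 ≤ lam)
    (hbound : ∀ v : Fin (N + 1) → ℝ, (∑ i, v i) = 0 →
      lam * (∑ i, (v i) ^ 2) ≤ ∑ i, ∑ j, v i * M i j * v j) :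
    (∀ u : Fin N → ℝ,
      (lam / ((N : ℝ) + 1)) * (∑ i, (u i) ^ 2) ≤
        ∑ i, ∑ j, u i * M i.succ j.succ * u j) ∧
    lam1 M / ((N : ℝ) + 1) ≤ lamMin (M.submatrix Fin.succ Fin.succ) := by
  refine ⟨key_stmt18 M hMs hM1 lam hlam hbound, ?_⟩
  rcases N with _ | n
  · -- N = 0 : both index sets are empty, both infima are 0
    have hS : {r : ℝ | ∃ v : Fin 1 → ℝ, (∑ i, (v i) ^ 2) = 1 ∧ (∑ i, v i) = 0 ∧
        r = ∑ i, ∑ j, v i * M i j * v j} = ∅ := by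
      ext r
      simp only [Set.mem_setOf_eq, Set.mem_empty_iff_false, iff_false]
      rintro ⟨v, h1, h2, -⟩
      rw [Fin.sum_univ_one] at h1 h2
      rw [h2] at h1
      norm_num at h1
    have hT : {r : ℝ | ∃ u : Fin 0 → ℝ, (∑ i, (u i) ^ 2) = 1 ∧
        r = ∑ i, ∑ j, u i * (M.submatrix Fin.succ Fin.succ) i j * u j} = ∅ := by
      ext r
      simp
    rw [lam1, lamMin, hS, hT, Real.sInf_empty]
    norm_num
  · -- N = n + 1
    set S := {r : ℝ | ∃ v : Fin (n + 2) → ℝ, (∑ i, (v i) ^ 2) = 1 ∧ (∑ i, v i) = 0 ∧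
        r = ∑ i, ∑ j, v i * M i j * v j} with hSdef
    have hSlb : ∀ r ∈ S, lam ≤ r := by
      rintro r ⟨v, h1, h2, rfl⟩
      have := hbound v h2
      rwa [h1, mul_one] at this
    have hSbdd : BddBelow S := ⟨lam, hSlb⟩
    have hSne : S.Nonempty := by
      set a : ℝ := Real.sqrt (1/2) with ha
      have ha2 : a ^ 2 = 1 / 2 := Real.sq_sqrt (by norm_num)
      set v : Fin (n + 2) → ℝ := Fin.cons a (Fin.cons (-a) (fun _ => 0)) with hvdef
      have hv1 : ∑ i, (v i) ^ 2 = 1 := by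
        rw [Fin.sum_univ_succ, Fin.sum_univ_succ]
        simp [hvdef, ha2]
        norm_num
      have hv2 : ∑ i, v i = 0 := by
        rw [Fin.sum_univ_succ, Fin.sum_univ_succ]
        simp [hvdef]
      exact ⟨_, v, hv1, hv2, rfl⟩
    have hμ0 : 0 ≤ lam1 M := le_csInf hSne (fun r hr => le_trans hlam (hSlb r hr))
    have hbound' : ∀ v : Fin (n + 2) → ℝ, (∑ i, v i) = 0 →
        lam1 M * (∑ i, (v i) ^ 2) ≤ ∑ i, ∑ j, v i * M i j * v j := by
      intro v hsum
      by_cases h0 : ∑ i, (v i)^2 = 0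
      · have hv0 : ∀ i, v i = 0 := by
          intro i
          have h := (Finset.sum_eq_zero_iff_of_nonneg
            (fun i _ => sq_nonneg (v i))).1 h0 i (Finset.mem_univ i)
          exact pow_eq_zero_iff (two_ne_zero) |>.1 h
        rw [h0, mul_zero]
        refine le_of_eq ?_
        symm
        exact Finset.sum_eq_zero fun i _ =>
          Finset.sum_eq_zero fun j _ => by rw [hv0 i]; ring
      · have hpos : 0 < ∑ i, (v i)^2 :=
          lt_of_le_of_ne (Finset.sum_nonneg fun i _ => sq_nonneg _) (Ne.symm h0)
        set t := Real.sqrt (∑ i, (v i)^2) with ht0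
        have ht : t^2 = ∑ i, (v i)^2 := Real.sq_sqrt hpos.le
        have htpos : 0 < t := Real.sqrt_pos.2 hpos
        set w : Fin (n + 2) → ℝ := fun i => v i / t with hwdef
        have hw1 : ∑ i, (w i) ^ 2 = 1 := by
          simp only [hwdef, div_pow]
          rw [← Finset.sum_div, ← ht, div_self (by positivity)]
        have hw2 : ∑ i, w i = 0 := by
          simp only [hwdef]
          rw [← Finset.sum_div, hsum, zero_div]
        have hmem : (∑ i, ∑ j, w i * M i j * w j) ∈ S := ⟨w, hw1, hw2, rfl⟩
        have hle := csInf_le hSbdd hmem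
        have hqq : ∑ i, ∑ j, w i * M i j * w j
            = (∑ i, ∑ j, v i * M i j * v j) / t^2 := by
          rw [Finset.sum_div]
          refine Finset.sum_congr rfl fun i _ => ?_
          rw [Finset.sum_div]
          refine Finset.sum_congr rfl fun j _ => ?_
          simp only [hwdef]
          rw [div_mul_eq_mul_div, div_mul_div_comm, ← pow_two]
        rw [hqq, le_div_iff₀ (by positivity)] at hle
        calc lam1 M * (∑ i, (v i)^2) = lam1 M * t^2 := by rw [ht]
        _ ≤ _ := hle
    have hkey := key_stmt18 M hMs hM1 (lam1 M) hμ0 hbound'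
    have hTne : {r : ℝ | ∃ u : Fin (n + 1) → ℝ, (∑ i, (u i) ^ 2) = 1 ∧
        r = ∑ i, ∑ j, u i * (M.submatrix Fin.succ Fin.succ) i j * u j}.Nonempty := by
      refine ⟨_, Fin.cons 1 (fun _ => 0), ?_, rfl⟩
      rw [Fin.sum_univ_succ]
      simp
    refine le_csInf hTne ?_
    rintro r ⟨u, h1, rfl⟩
    have := hkey u
    rw [h1, mul_one] at this
    simpa [Matrix.submatrix_apply] using this
end
end
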